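/- For every k ≥ 3 and ℓ ≥ 1, and all sufficiently large n, every k-uniform Berge-K_{1,ℓ}-saturated hypergraph on n vertices has at least min over a ∈ [n] with C(a−1, k−1) ≤ ℓ−2 of ⌈(ℓ−1)(n−a)/k⌉ + C(a, k) edges. -/

import Mathlib

def BergeStar {V : Type*} (ℓ : ℕ) (H : Finset (Finset V)) : Prop :=
  ∃ (v : V) (f : Fin ℓ → Finset V) (u : Fin ℓ → V),
    Function.Injective f ∧ Function.Injective u ∧
    ∀ i, f i ∈ H ∧ v ∈ f i ∧ u i ∈ f i ∧ u i ≠ v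

def CenteredStar {V : Type*} (m : ℕ) (H : Finset (Finset V)) (v : V) : Prop :=
  ∃ (f : Fin m → Finset V) (u : Fin m → V),
    Function.Injective f ∧ Function.Injective u ∧
    ∀ i, f i ∈ H ∧ v ∈ f i ∧ u i ∈ f i ∧ u i ≠ v

lemma exists_centered_of_insert {V : Type*} [DecidableEq (Finset V)] {L : ℕ}
    {H : Finset (Finset V)} {e : Finset V} (hno : ¬ BergeStar (L + 1) H)
    (hins : BergeStar (L + 1) (insert e H)) :
    ∃ v ∈ e, CenteredStar L H v := by
  obtain ⟨v, f, u, hf, hu, hall⟩ := hins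
  by_cases hx : ∃ i0, f i0 = e
  · obtain ⟨i0, hi0⟩ := hx
    refine ⟨v, hi0 ▸ (hall i0).2.1, f ∘ i0.succAbove, u ∘ i0.succAbove,
      hf.comp (Fin.succAbove_right_injective), hu.comp (Fin.succAbove_right_injective), ?_⟩
    intro j
    obtain ⟨h1, h2, h3, h4⟩ := hall (i0.succAbove j)
    refine ⟨?_, h2, h3, h4⟩
    rcases Finset.mem_insert.mp h1 with h | h
    · exact absurd (hf (h.trans hi0.symm)) (Fin.succAbove_ne i0 j)
    · exact h
  · refine absurd ⟨v, f, u, hf, hu, fun i => ?_⟩ hno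
    obtain ⟨h1, h2, h3, h4⟩ := hall i
    exact ⟨(Finset.mem_insert.mp h1).resolve_left (fun hh => hx ⟨i, hh⟩), h2, h3, h4⟩

lemma centeredStar_deg {V : Type*} [DecidableEq V] [DecidableEq (Finset V)] {m : ℕ}
    {H : Finset (Finset V)} {v : V} (h : CenteredStar m H v) :
    m ≤ (H.filter (fun e => v ∈ e)).card := by
  obtain ⟨f, u, hf, hu, hall⟩ := h
  calc m = (Finset.univ.image f).card := by
        rw [Finset.card_image_of_injective _ hf, Finset.card_univ, Fintype.card_fin]
    _ ≤ _ := Finset.card_le_card (fun x hx => by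
        obtain ⟨i, _, rfl⟩ := Finset.mem_image.mp hx
        exact Finset.mem_filter.mpr ⟨(hall i).1, (hall i).2.1⟩)


lemma choose_mul_id {b k : ℕ} (hb : 1 ≤ b) (hk : 1 ≤ k) :
    Nat.choose b k * k = b * Nat.choose (b - 1) (k - 1) := by
  obtain ⟨b', rfl⟩ : ∃ b', b = b' + 1 := ⟨b - 1, by omega⟩
  obtain ⟨k', rfl⟩ : ∃ k', k = k' + 1 := ⟨k - 1, by omega⟩
  simpa using (Nat.add_one_mul_choose_eq b' k').symm

theorem berge_star_saturation_lower_bound (k ℓ : ℕ) (hk : 3 ≤ k) (hl : 1 ≤ ℓ) :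
    ∃ N : ℕ, ∀ n : ℕ, N ≤ n → ∀ H : Finset (Finset (Fin n)),
      (∀ e ∈ H, e.card = k) →
      ¬ BergeStar ℓ H →
      (∀ e : Finset (Fin n), e.card = k → e ∉ H → BergeStar ℓ (insert e H)) →
      sInf {m : ℕ | ∃ a : ℕ, 1 ≤ a ∧ a ≤ n ∧ Nat.choose (a - 1) (k - 1) ≤ ℓ - 2 ∧
          m = Nat.ceil ((((ℓ - 1 : ℕ) : ℚ) * ((n - a : ℕ) : ℚ)) / (k : ℚ)) +
            Nat.choose a k}
        ≤ H.card := by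
  classical
  refine ⟨1, fun n hn H hcard hno hsat => ?_⟩
  have hk0 : (0 : ℚ) < (k : ℚ) := by
    have : 0 < k := by omega
    exact_mod_cast this
  by_cases hone : ℓ = 1
  · subst hone
    refine le_trans (Nat.sInf_le ?_) (Nat.zero_le _)
    refine ⟨1, le_refl 1, hn, ?_, ?_⟩
    · simp [Nat.choose_eq_zero_of_lt (show 0 < k - 1 by omega)]
    · norm_num [Nat.choose_eq_zero_of_lt (show (1:ℕ) < k by omega)]
  · obtain ⟨L, rfl⟩ : ∃ L, ℓ = L + 1 := ⟨ℓ - 1, by omega⟩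
    have hL : 1 ≤ L := by omega
    set B : Finset (Fin n) := Finset.univ.filter (fun v => ¬ CenteredStar L H v) with hBdef
    set b := B.card with hbdef
    have hbn : b ≤ n := by
      have := Finset.card_filter_le (Finset.univ : Finset (Fin n)) (fun v => ¬ CenteredStar L H v)
      simpa using this
    have hBcomp : ∀ S : Finset (Fin n), S ⊆ B → S.card = k → S ∈ H := by
      intro S hSB hSk
      by_contra hSH
      obtain ⟨v, hvS, hvc⟩ := exists_centered_of_insert hno (hsat S hSk hSH)
      exact (Finset.mem_filter.mp (hSB hvS)).2 hvc
    set H1 := H.filter (fun e => e ⊆ B) with hH1def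
    set H2 := H.filter (fun e => ¬ e ⊆ B) with hH2def
    have hsplit : H1.card + H2.card = H.card :=
      Finset.card_filter_add_card_filter_not _
    have hc1 : Nat.choose b k ≤ H1.card := by
      have hsub : B.powersetCard k ⊆ H1 := by
        intro S hS
        rw [Finset.mem_powersetCard] at hS
        exact Finset.mem_filter.mpr ⟨hBcomp S hS.1 hS.2, hS.1⟩
      have := Finset.card_le_card hsub
      rwa [Finset.card_powersetCard] at this
    set G := Finset.univ.filter (fun v => CenteredStar L H v) with hGdef
    have hGcard : G.card = n - b := by
      have h := Finset.card_filter_add_card_filter_not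
        (s := (Finset.univ : Finset (Fin n))) (p := fun v => CenteredStar L H v)
      simp only [Finset.card_univ, Fintype.card_fin] at h
      rw [← hGdef, ← hBdef] at h
      omega
    have hdeg : ∀ v ∈ G, L ≤ (H2.filter (fun e => v ∈ e)).card := by
      intro v hv
      have hvG := (Finset.mem_filter.mp hv).2
      refine le_trans (centeredStar_deg hvG) (Finset.card_le_card ?_)
      intro e he
      rw [Finset.mem_filter] at he ⊢
      refine ⟨Finset.mem_filter.mpr ⟨he.1, fun hsub => ?_⟩, he.2⟩
      exact (Finset.mem_filter.mp (hsub he.2)).2 hvG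
    have hsum : L * (n - b) ≤ k * H2.card := by
      calc L * (n - b) = ∑ _v ∈ G, L := by
            rw [Finset.sum_const, smul_eq_mul, hGcard, mul_comm]
        _ ≤ ∑ v ∈ G, (H2.filter (fun e => v ∈ e)).card := Finset.sum_le_sum hdeg
        _ = ∑ e ∈ H2, (G.filter (fun v => v ∈ e)).card := by
            simp_rw [Finset.card_filter]
            exact Finset.sum_comm
        _ ≤ ∑ e ∈ H2, k := Finset.sum_le_sum (fun e he => by
            have hs : G.filter (fun v => v ∈ e) ⊆ e := fun v hv => (Finset.mem_filter.mp hv).2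
            exact le_trans (Finset.card_le_card hs)
              (le_of_eq (hcard e (Finset.mem_filter.mp he).1)))
        _ = k * H2.card := by rw [Finset.sum_const, smul_eq_mul, mul_comm]
    have hceil : Nat.ceil ((L : ℚ) * ((n - b : ℕ) : ℚ) / (k : ℚ)) ≤ H2.card := by
      rw [Nat.ceil_le, div_le_iff₀ hk0]
      have : ((L * (n - b) : ℕ) : ℚ) ≤ ((k * H2.card : ℕ) : ℚ) := by exact_mod_cast hsum
      push_cast at this
      linarith
    have hkey : Nat.ceil ((L : ℚ) * ((n - b : ℕ) : ℚ) / (k : ℚ)) + Nat.choose b k ≤ H.card := by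
      omega
    by_cases hcase : 1 ≤ b ∧ Nat.choose (b - 1) (k - 1) ≤ L - 1
    · refine le_trans (Nat.sInf_le ?_) hkey
      exact ⟨b, hcase.1, hbn, hcase.2, rfl⟩
    · have hnat : L * (n - 1) ≤ L * (n - b) + Nat.choose b k * k := by
        rcases Nat.eq_zero_or_pos b with hb0 | hb1
        · have h1 : n - 1 ≤ n - b := by omega
          exact le_trans (Nat.mul_le_mul_left L h1) (Nat.le_add_right _ _)
        · have hLc : L ≤ Nat.choose (b - 1) (k - 1) := by
            by_contra hc
            push_neg at hc
            exact hcase ⟨hb1, by omega⟩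
          have hid : Nat.choose b k * k = b * Nat.choose (b - 1) (k - 1) :=
            choose_mul_id hb1 (by omega)
          have h1 : n - 1 ≤ (n - b) + (b - 1) := by omega
          calc L * (n - 1) ≤ L * ((n - b) + (b - 1)) := Nat.mul_le_mul_left L h1
            _ = L * (n - b) + L * (b - 1) := by ring
            _ ≤ L * (n - b) + Nat.choose b k * k := by
                have h2 : L * (b - 1) ≤ Nat.choose (b - 1) (k - 1) * b :=
                  Nat.mul_le_mul hLc (Nat.sub_le b 1)
                have h3 : Nat.choose (b - 1) (k - 1) * b = Nat.choose b k * k := by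
                  rw [hid, mul_comm]
                omega
      have hq : ((L : ℚ) * ((n - 1 : ℕ) : ℚ) / (k : ℚ)) ≤
          (L : ℚ) * ((n - b : ℕ) : ℚ) / (k : ℚ) + (Nat.choose b k : ℚ) := by
        rw [div_le_iff₀ hk0, add_mul, div_mul_cancel₀ _ (ne_of_gt hk0)]
        have : ((L * (n - 1) : ℕ) : ℚ) ≤ ((L * (n - b) + Nat.choose b k * k : ℕ) : ℚ) := by
          exact_mod_cast hnat
        push_cast at this
        linarith
      have hceil2 : Nat.ceil ((L : ℚ) * ((n - 1 : ℕ) : ℚ) / (k : ℚ)) ≤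
          Nat.ceil ((L : ℚ) * ((n - b : ℕ) : ℚ) / (k : ℚ)) + Nat.choose b k := by
        have h0 : (0 : ℚ) ≤ (L : ℚ) * ((n - b : ℕ) : ℚ) / (k : ℚ) := by positivity
        calc Nat.ceil ((L : ℚ) * ((n - 1 : ℕ) : ℚ) / (k : ℚ))
            ≤ Nat.ceil ((L : ℚ) * ((n - b : ℕ) : ℚ) / (k : ℚ) + (Nat.choose b k : ℚ)) :=
              Nat.ceil_le_ceil hq
          _ = _ := by rw [Nat.ceil_add_natCast h0]
      have hmem : (Nat.ceil ((L : ℚ) * ((n - 1 : ℕ) : ℚ) / (k : ℚ)) + Nat.choose 1 k) ∈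
          {m : ℕ | ∃ a : ℕ, 1 ≤ a ∧ a ≤ n ∧ Nat.choose (a - 1) (k - 1) ≤ L + 1 - 2 ∧
            m = Nat.ceil ((((L + 1 - 1 : ℕ) : ℚ) * ((n - a : ℕ) : ℚ)) / (k : ℚ)) +
              Nat.choose a k} := by
        refine ⟨1, le_refl 1, hn, ?_, ?_⟩
        · simp [Nat.choose_eq_zero_of_lt (show 0 < k - 1 by omega)]
        · norm_num
      refine le_trans (Nat.sInf_le hmem) ?_
      rw [Nat.choose_eq_zero_of_lt (show (1:ℕ) < k by omega), add_zero]
      exact le_trans hceil2 hkey
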